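/- For distinct propositional variables p and q, the formula ((p → (q → ⊥)) → ⊥) → p is not a theorem of minimal implicational natural deduction: it is not derivable from the empty set of assumptions. -/
import Mathlib

/-- Formulas of minimal implicational logic: propositional variables,
the atomic constant ⊥ (no inference rules), and implication. -/
inductive IForm : Type
  | var : ℕ → IForm
  | bot : IForm
  | imp : IForm → IForm → IForm
deriving DecidableEq

/-- Minimal implicational natural deduction. -/
inductive IDeriv : Set IForm → IForm → Prop
  | ax {Γ : Set IForm} {φ : IForm} : φ ∈ Γ → IDeriv Γ φ
  | impI {Γ : Set IForm} {α β : IForm} :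
      IDeriv (insert α Γ) β → IDeriv Γ (IForm.imp α β)
  | impE {Γ : Set IForm} {α β : IForm} :
      IDeriv Γ α → IDeriv Γ (IForm.imp α β) → IDeriv Γ β

/-- Boolean evaluation of an implicational formula under a valuation `v` of
the propositional variables and a Boolean value `b` for the atom ⊥. -/
def IForm.eval (v : ℕ → Bool) (b : Bool) : IForm → Bool
  | IForm.var n => v n
  | IForm.bot => b
  | IForm.imp α β => !(α.eval v b) || (β.eval v b)

lemma IDeriv.sound {Γ : Set IForm} {φ : IForm} (h : IDeriv Γ φ) (v : ℕ → Bool) (b : Bool)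
    (hΓ : ∀ ψ ∈ Γ, ψ.eval v b = true) : φ.eval v b = true := by
  induction h with
  | ax hmem => exact hΓ _ hmem
  | @impI Γ' α β _ ih =>
    simp only [IForm.eval]
    by_cases hα : IForm.eval v b α = true
    · simp [ih (by rintro ψ (rfl | hψ); exact hα; exact hΓ _ hψ)]
    · simp [Bool.not_eq_true] at hα; simp [hα]
  | impE _ _ ih1 ih2 =>
    have h1 := ih1 hΓ
    have h2 := ih2 hΓ
    simp only [IForm.eval, h1] at h2
    simpa using h2

/-- ((p → (q → ⊥)) → ⊥) → p is not a theorem of minimal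
implicational natural deduction, for distinct variables p and q. -/
theorem not_theorem_bot (p q : ℕ) (hpq : p ≠ q) :
    ¬ IDeriv ∅
      (IForm.imp
        (IForm.imp (IForm.imp (IForm.var p) (IForm.imp (IForm.var q) IForm.bot))
          IForm.bot)
        (IForm.var p)) := by
  intro h
  have := h.sound (fun _ => false) true (by simp)
  simp [IForm.eval] at this
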